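/- Let K be an algebraically closed field, let 𝔞 ⊆ K[T_1,…,T_r] be the ideal generated by polynomials g_1,…,g_s, and let J ⊆ {1,…,r}. Let 𝔞_J ⊆ K[T_1,…,T_r] be the ideal generated by g_1(T_J),…,g_s(T_J), where g(T_J) denotes the result of substituting 0 for every variable T_i with i ∉ J. Then J is an 𝔞-face, i.e., there exists z ∈ K^r with g_l(z) = 0 for all l = 1,…,s, z_i ≠ 0 for all i ∈ J and z_i = 0 for all i ∉ J, if and only if 1 ∉ 𝔞_J : (∏_{i∈J} T_i)^∞. -/

import Mathlib

open MvPolynomial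

lemma eval_subst_aux {K : Type*} [CommSemiring K] {r : ℕ} (J : Finset (Fin r))
    (z : Fin r → K) (p : MvPolynomial (Fin r) K) :
    eval z ((aeval fun i => if i ∈ J then (X i : MvPolynomial (Fin r) K) else 0) p)
      = eval (fun i => if i ∈ J then z i else 0) p := by
  induction p using MvPolynomial.induction_on with
  | C a => simp
  | add p q hp hq => rw [map_add, map_add, map_add, hp, hq]
  | mul_X p i hp =>
    rw [map_mul, map_mul, map_mul, hp, aeval_X, apply_ite (eval z), eval_X, map_zero, eval_X]

/-- Over an algebraically closed field `K`, for `𝔞 = ⟨g_1,…,g_s⟩` and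
`J ⊆ {1,…,r}`, the set `J` is an `𝔞`-face (i.e. `V(𝔞)` meets the torus orbit `T_J`)
iff `1 ∉ 𝔞_J : (∏_{i∈J} T_i)^∞`, where `𝔞_J` is generated by the `g_l` with the
variables outside `J` set to `0`. -/
theorem stmt_4
    {K : Type*} [Field K] [IsAlgClosed K] {r s : ℕ}
    (g : Fin s → MvPolynomial (Fin r) K)
    (J : Finset (Fin r)) :
    (∃ z : Fin r → K, (∀ l, eval z (g l) = 0) ∧ (∀ i, z i ≠ 0 ↔ i ∈ J)) ↔
    ¬ (1 : MvPolynomial (Fin r) K) ∈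
      {p : MvPolynomial (Fin r) K | ∃ N : ℕ, (∏ i ∈ J, X i) ^ N * p ∈
        Ideal.span (Set.range fun l =>
          (aeval fun i => if i ∈ J then (X i : MvPolynomial (Fin r) K) else 0) (g l))} := by
  set Φ : MvPolynomial (Fin r) K →ₐ[K] MvPolynomial (Fin r) K :=
    aeval fun i => if i ∈ J then (X i : MvPolynomial (Fin r) K) else 0 with hΦ
  set I : Ideal (MvPolynomial (Fin r) K) := Ideal.span (Set.range fun l => Φ (g l)) with hI
  constructor
  · rintro ⟨z, hz, hzJ⟩ ⟨N, hN⟩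
    -- z vanishes on I, but eval z ((∏ X)^N) ≠ 0
    have hz0 : ∀ i ∉ J, z i = 0 := fun i hi => by
      by_contra h; exact hi ((hzJ i).1 h)
    have hev : ∀ p ∈ I, eval z p = 0 := by
      intro p hp
      refine Submodule.span_induction ?_ ?_ ?_ ?_ hp
      · rintro q ⟨l, rfl⟩
        rw [eval_subst_aux]
        have : (fun i => if i ∈ J then z i else 0) = z := by
          funext i
          by_cases h : i ∈ J <;> simp [h, hz0 i]
        rw [this]; exact hz l
      · simp
      · intro a b _ _ ha hb; simp [ha, hb]
      · intro a b _ hb; simp [hb]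
    have := hev _ hN
    rw [map_mul, map_one, mul_one, map_pow, map_prod] at this
    have : ∏ i ∈ J, eval z (X i) = 0 := pow_eq_zero_iff (by
      intro h; rw [h, pow_zero] at this; exact one_ne_zero this) |>.mp this
    obtain ⟨i, hiJ, hi0⟩ := Finset.prod_eq_zero_iff.mp this
    exact (hzJ i).2 hiJ (by simpa using hi0)
  · intro h
    have hrad : (∏ i ∈ J, (X i : MvPolynomial (Fin r) K)) ∉ I.radical := by
      intro ⟨N, hN⟩
      exact h ⟨N, by simpa using hN⟩
    rw [← vanishingIdeal_zeroLocus_eq_radical (K := K), mem_vanishingIdeal_iff] at hrad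
    push_neg at hrad
    obtain ⟨z, hzI, hze⟩ := hrad
    refine ⟨fun i => if i ∈ J then z i else 0, ?_, ?_⟩
    · intro l
      rw [← eval_subst_aux]
      exact mem_zeroLocus_iff.mp hzI _ (Ideal.subset_span ⟨l, rfl⟩)
    · intro i
      rw [map_prod] at hze
      constructor
      · intro hi; by_contra hiJ; simp [hiJ] at hi
      · intro hi
        have : eval z (X i) ≠ 0 := fun h => hze (Finset.prod_eq_zero hi h)
        simpa [hi] using this
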